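/- Let ω be a braidless fundamental weight of a root system Φ and let τ_ℓ = s_{i_1} ⋯ s_{i_N} be a reduced decomposition of the longest minimal coset representative in ᵚW. If σ is a permutation of {1,…,N} arising from a series of exchanges of adjacent commuting simple reflections in this word, then σ(1) = 1; moreover, if j < k and either s_{i_j} and s_{i_k} do not commute or i_j = i_k, then σ⁻¹(j) < σ⁻¹(k). -/
import Mathlib


/-- `IsExchangeable M ω σ` means the permutation `σ` of the positions of the word
`ω : Fin N → B` arises from a series of exchanges of adjacent commuting (orthogonal, i.e.
`M i j = 2`) simple reflections: the word obtained from `ω` by the arrangement `σ` is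
`ω ∘ σ`. -/
inductive IsExchangeable {B : Type*} (M : CoxeterMatrix B) {N : ℕ} (ω : Fin N → B) :
    Equiv.Perm (Fin N) → Prop
  | one : IsExchangeable M ω 1
  | step (σ : Equiv.Perm (Fin N)) (p q : Fin N) (hpq : (p : ℕ) + 1 = (q : ℕ))
      (hcomm : M (ω (σ p)) (ω (σ q)) = 2)
      (hσ : IsExchangeable M ω σ) : IsExchangeable M ω (σ * Equiv.swap p q)


lemma myOfFnDecomp {B : Type*} {N : ℕ} (u : Fin N → B) (p q : Fin N)
    (hpq : (p : ℕ) + 1 = (q : ℕ)) :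
    List.ofFn u = (List.ofFn u).take (p : ℕ) ++ u p :: u q :: (List.ofFn u).drop ((p : ℕ) + 2) := by
  have hp : (p : ℕ) < N := p.isLt
  have hq : (q : ℕ) < N := q.isLt
  conv_lhs => rw [← List.take_append_drop (p : ℕ) (List.ofFn u)]
  congr 1
  rw [List.drop_eq_getElem_cons (by simp [hp])]
  congr 1
  · simp
  rw [List.drop_eq_getElem_cons (by simp; omega)]
  congr 1
  · simp only [List.getElem_ofFn]
    congr 1
    exact Fin.ext hpq

lemma mySwapLt {N : ℕ} (p q a b : Fin N) (hpq : (p : ℕ) + 1 = (q : ℕ)) (hab : a < b)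
    (h : ¬(a = p ∧ b = q)) : Equiv.swap p q a < Equiv.swap p q b := by
  have h' : (a : ℕ) ≠ (p : ℕ) ∨ (b : ℕ) ≠ (q : ℕ) := by
    by_contra hc
    push_neg at hc
    exact h ⟨Fin.ext hc.1, Fin.ext hc.2⟩
  rw [Equiv.swap_apply_def, Equiv.swap_apply_def]
  split_ifs <;> simp only [Fin.lt_def, Fin.ext_iff] at * <;> omega

lemma myWordProdSwap {B W : Type*} [Group W] {M : CoxeterMatrix B} (cs : CoxeterSystem M W)
    {N : ℕ} (u : Fin N → B) (p q : Fin N) (hpq : (p : ℕ) + 1 = (q : ℕ))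
    (hcomm : cs.simple (u p) * cs.simple (u q) = cs.simple (u q) * cs.simple (u p)) :
    cs.wordProd (List.ofFn (u ∘ Equiv.swap p q)) = cs.wordProd (List.ofFn u) := by
  set u' : Fin N → B := u ∘ Equiv.swap p q with hu'
  have hne : p ≠ q := by intro h; rw [h] at hpq; omega
  have h1 : u' p = u q := by simp [hu', Equiv.swap_apply_left]
  have h2 : u' q = u p := by simp [hu', Equiv.swap_apply_right]
  have htake : (List.ofFn u').take (p : ℕ) = (List.ofFn u).take (p : ℕ) := by
    apply List.ext_getElem (by simp)
    intro i hi₁ hi₂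
    have hip : i < (p : ℕ) := by simp at hi₁; omega
    have hiN : i < N := by omega
    simp only [List.getElem_take, List.getElem_ofFn]
    show u (Equiv.swap p q ⟨i, hiN⟩) = u ⟨i, hiN⟩
    rw [Equiv.swap_apply_of_ne_of_ne]
    · exact fun h => by rw [Fin.ext_iff] at h; simp at h; omega
    · exact fun h => by rw [Fin.ext_iff] at h; simp at h; omega
  have hdrop : (List.ofFn u').drop ((p : ℕ) + 2) = (List.ofFn u).drop ((p : ℕ) + 2) := by
    apply List.ext_getElem (by simp)
    intro i hi₁ hi₂
    have hiN : (p : ℕ) + 2 + i < N := by simp at hi₁; omega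
    simp only [List.getElem_drop, List.getElem_ofFn]
    show u (Equiv.swap p q ⟨(p : ℕ) + 2 + i, hiN⟩) = u ⟨(p : ℕ) + 2 + i, hiN⟩
    rw [Equiv.swap_apply_of_ne_of_ne]
    · exact fun h => by rw [Fin.ext_iff] at h; simp at h; omega
    · exact fun h => by rw [Fin.ext_iff] at h; simp at h; omega
  rw [myOfFnDecomp u' p q hpq, htake, hdrop, h1, h2]
  conv_rhs => rw [myOfFnDecomp u p q hpq]
  simp only [cs.wordProd_append, cs.wordProd_cons]
  rw [← mul_assoc (cs.simple (u q)), ← mul_assoc (cs.simple (u p)), ← hcomm]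

lemma mySimpleComm {B W : Type*} [Group W] {M : CoxeterMatrix B} (cs : CoxeterSystem M W)
    {a b : B} (h : M a b = 2) :
    cs.simple a * cs.simple b = cs.simple b * cs.simple a := by
  have h1 := cs.simple_mul_simple_pow a b
  rw [h, pow_two] at h1
  have h2 : (cs.simple a * cs.simple b)⁻¹ = cs.simple a * cs.simple b :=
    inv_eq_of_mul_eq_one_right h1
  calc cs.simple a * cs.simple b = (cs.simple a * cs.simple b)⁻¹ := h2.symm
    _ = (cs.simple b)⁻¹ * (cs.simple a)⁻¹ := by rw [mul_inv_rev]
    _ = cs.simple b * cs.simple a := by rw [cs.inv_simple, cs.inv_simple]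

/-- Let `ω = ω_{i₀}` be a braidless fundamental weight (any two reduced words of a minimal
coset representative of `W_ω\W` differ by exchanges of adjacent commuting simple
reflections — hypothesis `hbraid`), and let `s_{i_1} ⋯ s_{i_N}` (the word `ω`) be a reduced
decomposition of the longest minimal coset representative `τ_ℓ` of `ᵚW`.  If `σ` is a
permutation of `{1, …, N}` arising from a series of exchanges of adjacent commuting simple
reflections in this word, then `σ(1) = 1`; moreover, if `j < k` and either `s_{i_j}` and
`s_{i_k}` do not commute or `i_j = i_k`, then `σ⁻¹(j) < σ⁻¹(k)`. -/
theorem stmt17 {B W : Type*} [Group W] [Finite W]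
    {M : CoxeterMatrix B} (cs : CoxeterSystem M W) (i₀ : B)
    (Wω : Subgroup W) (hWω : Wω = Subgroup.closure (cs.simple '' {i | i ≠ i₀}))
    (hbraid : ∀ τ : W, (∀ u ∈ Wω, cs.length (u * τ) = cs.length u + cs.length τ) →
      ∀ (m : ℕ) (u v : Fin m → B),
        cs.IsReduced (List.ofFn u) → cs.wordProd (List.ofFn u) = τ →
        cs.IsReduced (List.ofFn v) → cs.wordProd (List.ofFn v) = τ →
        ∃ σ : Equiv.Perm (Fin m), IsExchangeable M u σ ∧ v = u ∘ σ)
    (τl : W)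
    (hτl_min : ∀ u ∈ Wω, cs.length (u * τl) = cs.length u + cs.length τl)
    (hτl_long : ∀ τ : W, (∀ u ∈ Wω, cs.length (u * τ) = cs.length u + cs.length τ) →
        cs.length τ ≤ cs.length τl)
    (N : ℕ) (hN : 0 < N) (ω : Fin N → B)
    (hωred : cs.IsReduced (List.ofFn ω)) (hωprod : cs.wordProd (List.ofFn ω) = τl)
    (σ : Equiv.Perm (Fin N)) (hσ : IsExchangeable M ω σ) :
    σ ⟨0, hN⟩ = ⟨0, hN⟩ ∧
      ∀ j k : Fin N, j < k → (M (ω j) (ω k) ≠ 2 ∨ ω j = ω k) → σ⁻¹ j < σ⁻¹ k := by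
  obtain ⟨n, rfl⟩ : ∃ n, N = n + 1 := ⟨N - 1, by omega⟩
  -- length of τl
  have hlen : cs.length τl = n + 1 := by
    rw [← hωprod]
    rw [CoxeterSystem.IsReduced] at hωred
    rw [hωred]
    simp
  -- any word (of length n+1) with product τl starts with i₀
  have first_letter : ∀ v : Fin (n + 1) → B, cs.wordProd (List.ofFn v) = τl → v 0 = i₀ := by
    intro v hv
    by_contra hne
    have hmem : cs.simple (v 0) ∈ Wω := by
      rw [hWω]
      exact Subgroup.subset_closure ⟨v 0, hne, rfl⟩
    have hmin := hτl_min _ hmem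
    rw [cs.length_simple, hlen] at hmin
    have hsplit : cs.simple (v 0) * τl = cs.wordProd (List.ofFn (v ∘ Fin.succ)) := by
      rw [← hv, List.ofFn_succ, cs.wordProd_cons, cs.simple_mul_simple_cancel_left]
      rfl
    have hle : cs.length (cs.simple (v 0) * τl) ≤ n := by
      rw [hsplit]
      simpa using cs.length_wordProd_le (List.ofFn (v ∘ Fin.succ))
    omega
  -- main induction
  have main : cs.wordProd (List.ofFn (ω ∘ σ)) = τl ∧ σ ⟨0, hN⟩ = ⟨0, hN⟩ ∧
      ∀ j k : Fin (n + 1), j < k → (M (ω j) (ω k) ≠ 2 ∨ ω j = ω k) → σ⁻¹ j < σ⁻¹ k := by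
    induction hσ with
    | one =>
      refine ⟨by simpa using hωprod, rfl, fun j k hjk _ => ?_⟩
      simpa using hjk
    | step σ p q hpq hcomm hσ ih =>
      obtain ⟨ihprod, ihzero, ihord⟩ := ih
      have hcomm' : cs.simple ((ω ∘ σ) p) * cs.simple ((ω ∘ σ) q)
          = cs.simple ((ω ∘ σ) q) * cs.simple ((ω ∘ σ) p) := mySimpleComm cs hcomm
      have hcompose : ω ∘ ⇑(σ * Equiv.swap p q) = (ω ∘ σ) ∘ Equiv.swap p q := rfl
      have hprod' : cs.wordProd (List.ofFn (ω ∘ ⇑(σ * Equiv.swap p q))) = τl := by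
        rw [hcompose, myWordProdSwap cs (ω ∘ σ) p q hpq hcomm', ihprod]
      refine ⟨hprod', ?_, ?_⟩
      · -- σ' 0 = 0
        by_cases hp0 : p = ⟨0, hN⟩
        · exfalso
          have hA : ω (σ p) = i₀ := by
            have := first_letter (ω ∘ σ) ihprod
            rw [hp0]
            exact this
          have hB : ω (σ q) = i₀ := by
            have := first_letter (ω ∘ ⇑(σ * Equiv.swap p q)) hprod'
            have h0 : (ω ∘ ⇑(σ * Equiv.swap p q)) 0 = ω (σ q) := by
              show ω (σ (Equiv.swap p q 0)) = ω (σ q)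
              have : Equiv.swap p q 0 = q := by
                have : (0 : Fin (n + 1)) = p := hp0.symm
                rw [this, Equiv.swap_apply_left]
              rw [this]
            rw [h0] at this
            exact this
          rw [hA, hB] at hcomm
          have := M.diagonal i₀
          omega
        · show σ (Equiv.swap p q ⟨0, hN⟩) = ⟨0, hN⟩
          rw [Equiv.swap_apply_of_ne_of_ne (fun h => hp0 h.symm)
            (by intro h; rw [← h] at hpq; simp at hpq), ihzero]
      · intro j k hjk hcond
        have hab : σ⁻¹ j < σ⁻¹ k := ihord j k hjk hcond
        have hinv : ∀ x, (σ * Equiv.swap p q)⁻¹ x = Equiv.swap p q (σ⁻¹ x) := by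
          intro x
          simp [mul_inv_rev, Equiv.swap_inv]
        rw [hinv, hinv]
        apply mySwapLt p q _ _ hpq hab
        rintro ⟨hap, hbq⟩
        have hj : j = σ p := by rw [← hap]; simp
        have hk : k = σ q := by rw [← hbq]; simp
        rcases hcond with hne | heq
        · exact hne (by rw [hj, hk]; exact hcomm)
        · rw [hj, hk] at heq
          rw [heq] at hcomm
          have := M.diagonal (ω (σ q))
          omega
  exact ⟨main.2.1, main.2.2⟩
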